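/- arXiv:1607.08291 — 9 statements merged into one kernel-verified Lean document; each statement's English description precedes it below -/
import Mathlib

section
/- Let H be a connected unicyclic k-uniform hypergraph (n = m(k-1), where n is the number of vertices and m the number of edges). Then every two vertices of H are contained together in at most two common edges. -/
/-- If a path in the incidence relation starts inside `W` and ends outside `W`,
some edge meets both `W` and its complement. -/
private lemma stmt2_path_cross {V : Type*} (E : Finset (Finset V)) (W : Finset V) :
    ∀ a b : V, Relation.ReflTransGen (fun a b => ∃ e ∈ E, a ∈ e ∧ b ∈ e) a b →
      a ∈ W → b ∉ W → ∃ g ∈ E, (∃ x ∈ g, x ∈ W) ∧ ∃ y ∈ g, y ∉ W := by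
  intro a b hab
  induction hab using Relation.ReflTransGen.head_induction_on with
  | refl => intro ha hb; exact absurd ha hb
  | head hac hcb ih =>
      intro ha hb
      rename_i a' c
      by_cases hc : c ∈ W
      · exact ih hc hb
      · obtain ⟨e, heE, hae, hce⟩ := hac
        exact ⟨e, heE, ⟨a', hae, ha⟩, ⟨c, hce, hc⟩⟩

/-- Connectivity: a nonempty proper subfamily of edges is touched by an outside edge. -/
private lemma stmt2_exists_touching {V : Type*} [DecidableEq V]
    (E S : Finset (Finset V))
    (hk0 : ∀ e ∈ E, e.Nonempty)
    (hconn : ∀ u v : V, Relation.ReflTransGen (fun a b => ∃ e ∈ E, a ∈ e ∧ b ∈ e) u v)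
    (hSE : S ⊆ E) (hS : S.Nonempty) (hne : S ≠ E) :
    ∃ g ∈ E, g ∉ S ∧ ∃ x ∈ g, x ∈ S.sup id := by
  set W := S.sup id with hW
  obtain ⟨e0, he0⟩ := hS
  obtain ⟨a, ha⟩ := hk0 e0 (hSE he0)
  have haW : a ∈ W := by
    have : (e0 : Finset V) ≤ W := Finset.le_sup (f := id) he0
    exact this ha
  obtain ⟨f, hf⟩ := Finset.exists_of_ssubset (hSE.ssubset_of_ne hne)
  obtain ⟨b, hb⟩ := hk0 f hf.1
  by_cases hbW : b ∈ W
  · exact ⟨f, hf.1, hf.2, b, hb, hbW⟩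
  · obtain ⟨g, hgE, ⟨x, hxg, hxW⟩, y, hyg, hyW⟩ :=
      stmt2_path_cross E W a b (hconn a b) haW hbW
    have hgS : g ∉ S := by
      intro hgS
      exact hyW ((Finset.le_sup (f := id) hgS) hyg)
    exact ⟨g, hgE, hgS, x, hxg, hxW⟩

/-- in a connected unicyclic k-uniform hypergraph (n = m(k-1)),
every two distinct vertices lie together in at most two edges. -/
theorem stmt_2 {V : Type*} [Fintype V] [DecidableEq V]
    (E : Finset (Finset V)) (k : ℕ) (hk : 2 ≤ k)
    (huniform : ∀ e ∈ E, e.card = k)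
    (hconn : ∀ u v : V, Relation.ReflTransGen (fun a b => ∃ e ∈ E, a ∈ e ∧ b ∈ e) u v)
    (hcyc : Fintype.card V = E.card * (k - 1)) :
    ∀ u v : V, u ≠ v → (E.filter (fun e => u ∈ e ∧ v ∈ e)).card ≤ 2 := by
  intro u v huv
  by_contra hlt
  push_neg at hlt
  have hk0 : ∀ e ∈ E, e.Nonempty := by
    intro e he
    have := huniform e he
    exact Finset.card_pos.mp (by omega)
  -- every vertex lies in some edge
  have hcover : ∀ w : V, ∃ e ∈ E, w ∈ e := by
    intro w
    rcases eq_or_ne w u with rfl | hwu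
    · rcases (hconn w v).cases_head with h | ⟨c, ⟨e, heE, hwe, _⟩, _⟩
      · exact absurd h huv
      · exact ⟨e, heE, hwe⟩
    · rcases (hconn w u).cases_head with h | ⟨c, ⟨e, heE, hwe, _⟩, _⟩
      · exact absurd h hwu
      · exact ⟨e, heE, hwe⟩
  -- extract three distinct edges containing u and v
  obtain ⟨t, htF, htcard⟩ :=
    Finset.exists_subset_card_eq (s := E.filter (fun e => u ∈ e ∧ v ∈ e)) (n := 3) hlt
  have htE : t ⊆ E := htF.trans (Finset.filter_subset _ _)
  have htuv : ∀ e ∈ t, u ∈ e ∧ v ∈ e := fun e he => (Finset.mem_filter.mp (htF he)).2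
  obtain ⟨e1, e2, e3, h12, h13, h23, ht⟩ := Finset.card_eq_three.mp htcard
  -- base bound : |e1 ∪ e2 ∪ e3| + 1 ≤ 3 * (k-1)
  have hbase : (t.sup id).card + 1 ≤ 3 * (k - 1) := by
    have hsup : t.sup id = e3 ∪ (e2 ∪ e1) := by
      rw [ht]
      simp [Finset.sup_insert, Finset.union_comm, Finset.union_left_comm]
    have he1 : e1 ∈ t := by rw [ht]; simp
    have he2 : e2 ∈ t := by rw [ht]; simp
    have he3 : e3 ∈ t := by rw [ht]; simp
    have hc1 : e1.card = k := huniform e1 (htE he1)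
    have hc2 : e2.card = k := huniform e2 (htE he2)
    have hc3 : e3.card = k := huniform e3 (htE he3)
    have hi2 : 2 ≤ (e2 ∩ e1).card := by
      have : ({u, v} : Finset V) ⊆ e2 ∩ e1 := by
        intro x hx
        rcases Finset.mem_insert.mp hx with rfl | hx
        · exact Finset.mem_inter.mpr ⟨(htuv _ he2).1, (htuv _ he1).1⟩
        · rw [Finset.mem_singleton.mp hx]
          exact Finset.mem_inter.mpr ⟨(htuv _ he2).2, (htuv _ he1).2⟩
      calc 2 = ({u, v} : Finset V).card := (Finset.card_pair huv).symm
        _ ≤ _ := Finset.card_le_card this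
    have hi3 : 2 ≤ (e3 ∩ (e2 ∪ e1)).card := by
      have : ({u, v} : Finset V) ⊆ e3 ∩ (e2 ∪ e1) := by
        intro x hx
        rcases Finset.mem_insert.mp hx with rfl | hx
        · exact Finset.mem_inter.mpr ⟨(htuv _ he3).1,
            Finset.mem_union_left _ (htuv _ he2).1⟩
        · rw [Finset.mem_singleton.mp hx]
          exact Finset.mem_inter.mpr ⟨(htuv _ he3).2,
            Finset.mem_union_left _ (htuv _ he2).2⟩
      calc 2 = ({u, v} : Finset V).card := (Finset.card_pair huv).symm
        _ ≤ _ := Finset.card_le_card this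
    have hd2 : (e2 ∩ e1).card + (e2 \ e1).card = e2.card :=
      Finset.card_inter_add_card_sdiff e2 e1
    have hd3 : (e3 ∩ (e2 ∪ e1)).card + (e3 \ (e2 ∪ e1)).card = e3.card :=
      Finset.card_inter_add_card_sdiff e3 (e2 ∪ e1)
    have hu2 : (e2 \ e1).card + e1.card = (e2 ∪ e1).card :=
      Finset.card_sdiff_add_card e2 e1
    have hu3 : (e3 \ (e2 ∪ e1)).card + (e2 ∪ e1).card = (e3 ∪ (e2 ∪ e1)).card :=
      Finset.card_sdiff_add_card e3 (e2 ∪ e1)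
    rw [hsup]
    omega
  -- greedy growth
  have hm3 : 3 ≤ E.card := by
    calc 3 = t.card := htcard.symm
      _ ≤ E.card := Finset.card_le_card htE
  have key : ∀ N : ℕ, 3 + N ≤ E.card →
      ∃ S : Finset (Finset V), t ⊆ S ∧ S ⊆ E ∧ S.card = 3 + N ∧
        (S.sup id).card + 1 ≤ S.card * (k - 1) := by
    intro N
    induction N with
    | zero =>
        intro _
        exact ⟨t, Finset.Subset.refl t, htE, by omega, by rw [htcard]; exact hbase⟩
    | succ N ih =>
        intro hle
        obtain ⟨S, htS, hSE, hScard, hbound⟩ := ih (by omega)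
        have hSne : S.Nonempty := by
          rw [← Finset.card_pos, hScard]; omega
        have hne : S ≠ E := by
          intro h; rw [h] at hScard; omega
        obtain ⟨g, hgE, hgS, x, hxg, hxW⟩ :=
          stmt2_exists_touching E S hk0 hconn hSE hSne hne
        refine ⟨insert g S, htS.trans (Finset.subset_insert _ _),
          Finset.insert_subset hgE hSE, ?_, ?_⟩
        · rw [Finset.card_insert_of_notMem hgS]; omega
        · have hsup : (insert g S).sup id = g ∪ S.sup id := by
            simp [Finset.sup_insert]
          have hun : ((g : Finset V) \ S.sup id).card + (S.sup id).card =
              (g ∪ S.sup id).card := Finset.card_sdiff_add_card g (S.sup id)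
          have hgi : 1 ≤ ((g : Finset V) ∩ S.sup id).card :=
            Finset.card_pos.mpr ⟨x, Finset.mem_inter.mpr ⟨hxg, hxW⟩⟩
          have hgd : ((g : Finset V) ∩ S.sup id).card +
              ((g : Finset V) \ S.sup id).card = g.card :=
            Finset.card_inter_add_card_sdiff g (S.sup id)
          have hgk : g.card = k := huniform g hgE
          rw [hsup, Finset.card_insert_of_notMem hgS, add_mul]
          have h1 : ((g : Finset V) \ S.sup id).card ≤ k - 1 := by omega
          omega
  obtain ⟨S, htS, hSE, hScard, hbound⟩ := key (E.card - 3) (by omega)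
  have hSeq : S = E := Finset.eq_of_subset_of_card_le hSE (by omega)
  rw [hSeq] at hbound
  have hVle : Fintype.card V ≤ (E.sup id).card := by
    apply Finset.card_le_card
    intro w _
    obtain ⟨e, heE, hwe⟩ := hcover w
    exact Finset.mem_sup.mpr ⟨e, heE, hwe⟩
  omega
end

section
/- Let H be a connected unicyclic k-uniform hypergraph. Then every three distinct vertices of H have at most one common edge containing all three. -/
private lemma crossing {V : Type*} [DecidableEq V] (E : Finset (Finset V)) (U : Finset V)
    {a b : V}
    (h : Relation.ReflTransGen (fun a b => ∃ e ∈ E, a ∈ e ∧ b ∈ e) b a)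
    (hb : b ∈ U) (ha : a ∉ U) :
    ∃ g ∈ E, (∃ x ∈ g, x ∈ U) ∧ ∃ y ∈ g, y ∉ U := by
  induction h with
  | refl => exact absurd hb ha
  | @tail c d hbc hcd ih =>
    obtain ⟨g, hgE, hcg, hdg⟩ := hcd
    by_cases hcU : c ∈ U
    · exact ⟨g, hgE, ⟨c, hcg, hcU⟩, ⟨d, hdg, ha⟩⟩
    · exact ih hcU

private lemma grow {V : Type*} [DecidableEq V] (E : Finset (Finset V)) (k : ℕ) (hk : 2 ≤ k)
    (huniform : ∀ e ∈ E, e.card = k)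
    (hconn : ∀ u v : V, Relation.ReflTransGen (fun a b => ∃ e ∈ E, a ∈ e ∧ b ∈ e) u v) :
    ∀ n (F : Finset (Finset V)), (E \ F).card = n → F ⊆ E → F.Nonempty →
      (E.biUnion id).card + F.card * (k - 1) ≤ (F.biUnion id).card + E.card * (k - 1) := by
  intro n
  induction n using Nat.strong_induction_on with
  | _ n ih =>
    intro F hcard hFE hFne
    by_cases hEF : E ⊆ F
    · have hFEeq : F = E := Finset.Subset.antisymm hFE hEF
      subst hFEeq
      exact le_refl _
    · have hss : F ⊂ E := Finset.ssubset_iff_of_subset hFE |>.mpr (by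
        obtain ⟨x, hx⟩ := Finset.not_subset.mp hEF
        exact ⟨x, hx.1, hx.2⟩)
      -- find g ∈ E \ F that meets U := F.biUnion id
      set U := F.biUnion id with hU
      have hgex : ∃ g ∈ E, g ∉ F ∧ ∃ x ∈ g, x ∈ U := by
        obtain ⟨g0, hg0E, hg0F⟩ := Finset.exists_of_ssubset hss
        by_cases hmeet : ∃ x ∈ g0, x ∈ U
        · exact ⟨g0, hg0E, hg0F, hmeet⟩
        · push_neg at hmeet
          -- pick a ∈ g0 (outside U) and b ∈ U, use connectivity
          have hg0ne : g0.Nonempty := by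
            rw [← Finset.card_pos, huniform g0 hg0E]; omega
          obtain ⟨a, ha⟩ := hg0ne
          have haU : a ∉ U := fun h => hmeet a ha h
          obtain ⟨e0, he0F⟩ := hFne
          have he0ne : e0.Nonempty := by
            rw [← Finset.card_pos, huniform e0 (hFE he0F)]; omega
          obtain ⟨b, hb⟩ := he0ne
          have hbU : b ∈ U := Finset.mem_biUnion.mpr ⟨e0, he0F, hb⟩
          obtain ⟨g, hgE, hgmeet, y, hyg, hyU⟩ := crossing E U (hconn b a) hbU haU
          refine ⟨g, hgE, fun hgF => hyU (Finset.mem_biUnion.mpr ⟨g, hgF, hyg⟩), hgmeet⟩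
      obtain ⟨g, hgE, hgF, x, hxg, hxU⟩ := hgex
      set F' := insert g F with hF'
      have hcard' : (E \ F').card < n := by
        have h1 : E \ F' = (E \ F).erase g := by
          rw [hF', Finset.sdiff_insert]
        have hgEF : g ∈ E \ F := Finset.mem_sdiff.mpr ⟨hgE, hgF⟩
        rw [h1, Finset.card_erase_of_mem hgEF, hcard]
        have : 0 < n := by rw [← hcard]; exact Finset.card_pos.mpr ⟨g, hgEF⟩
        omega
      have hsub' : F' ⊆ E := Finset.insert_subset hgE hFE
      have ihres := ih _ hcard' F' rfl hsub' (Finset.insert_nonempty _ _)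
      have hcardF' : F'.card = F.card + 1 := Finset.card_insert_of_notMem hgF
      have hUnion : F'.biUnion id = g ∪ U := by
        rw [hF', Finset.biUnion_insert]; rfl
      have hsd : (g \ U).card + U.card = (g ∪ U).card := Finset.card_sdiff_add_card g U
      have hlt : (g \ U).card < k := by
        rw [← huniform g hgE]
        exact Finset.card_lt_card ⟨Finset.sdiff_subset, fun hsub =>
          (Finset.mem_sdiff.mp (hsub hxg)).2 hxU⟩
      have hUb : (F'.biUnion id).card ≤ U.card + (k - 1) := by
        rw [hUnion, ← hsd]
        omega
      rw [hcardF', add_mul, one_mul] at ihres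
      -- combine
      have hk1 : 1 ≤ k := le_trans (by norm_num) hk
      calc (E.biUnion id).card + F.card * (k - 1)
          ≤ (F'.biUnion id).card + E.card * (k - 1) - (k - 1) := by omega
        _ ≤ U.card + E.card * (k - 1) := by omega

/-- in a connected unicyclic k-uniform hypergraph, every three distinct
vertices have at most one common edge. -/
theorem stmt_3 {V : Type*} [Fintype V] [DecidableEq V]
    (E : Finset (Finset V)) (k : ℕ) (hk : 2 ≤ k)
    (huniform : ∀ e ∈ E, e.card = k)
    (hconn : ∀ u v : V, Relation.ReflTransGen (fun a b => ∃ e ∈ E, a ∈ e ∧ b ∈ e) u v)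
    (hcyc : Fintype.card V = E.card * (k - 1)) :
    ∀ u v w : V, u ≠ v → u ≠ w → v ≠ w →
      (E.filter (fun e => u ∈ e ∧ v ∈ e ∧ w ∈ e)).card ≤ 1 := by
  intro u v w huv huw hvw
  by_contra hlt
  push_neg at hlt
  obtain ⟨e, he, f, hf, hef⟩ := Finset.one_lt_card.mp hlt
  rw [Finset.mem_filter] at he hf
  obtain ⟨heE, hue, hve, hwe⟩ := he
  obtain ⟨hfE, huf, hvf, hwf⟩ := hf
  -- the union of all edges is the whole vertex set
  have hcover : E.biUnion id = Finset.univ := by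
    apply Finset.eq_univ_iff_forall.mpr
    intro x
    rcases (hconn x u).cases_head with heq | ⟨c, ⟨g, hgE, hxg, _⟩, _⟩
    · subst heq; exact Finset.mem_biUnion.mpr ⟨e, heE, hue⟩
    · exact Finset.mem_biUnion.mpr ⟨g, hgE, hxg⟩
  have hcardU : (E.biUnion id).card = E.card * (k - 1) := by
    rw [hcover, Finset.card_univ, hcyc]
  -- the base pair {e, f}
  have hef3 : 3 ≤ (e ∩ f).card := by
    have hsub : ({u, v, w} : Finset V) ⊆ e ∩ f := by
      intro z hz
      simp only [Finset.mem_insert, Finset.mem_singleton] at hz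
      rcases hz with rfl | rfl | rfl <;> exact Finset.mem_inter.mpr ⟨by assumption, by assumption⟩
    have hc3 : ({u, v, w} : Finset V).card = 3 := by
      rw [Finset.card_insert_of_notMem (by simp [huv, huw]),
        Finset.card_insert_of_notMem (by simp [hvw]), Finset.card_singleton]
    calc 3 = ({u, v, w} : Finset V).card := hc3.symm
      _ ≤ (e ∩ f).card := Finset.card_le_card hsub
  have huni : (e ∪ f).card + (e ∩ f).card = 2 * k := by
    rw [Finset.card_union_add_card_inter, huniform e heE, huniform f hfE]; ring
  have hF0sub : ({e, f} : Finset (Finset V)) ⊆ E := by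
    intro z hz
    simp only [Finset.mem_insert, Finset.mem_singleton] at hz
    rcases hz with rfl | rfl <;> assumption
  have hF0card : ({e, f} : Finset (Finset V)).card = 2 := by
    rw [Finset.card_insert_of_notMem (by simp [hef]), Finset.card_singleton]
  have hF0union : ({e, f} : Finset (Finset V)).biUnion id = e ∪ f := by
    rw [Finset.biUnion_insert, Finset.singleton_biUnion]; rfl
  have hgrow := grow E k hk huniform hconn _ {e, f} rfl hF0sub ⟨e, by simp⟩
  rw [hF0card, hF0union, hcardU] at hgrow
  -- arithmetic contradiction
  obtain ⟨k', rfl⟩ : ∃ k', k = k' + 1 := ⟨k - 1, by omega⟩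
  simp only [Nat.add_sub_cancel] at hgrow
  have hA : E.card * k' + 2 * k' ≤ (e ∪ f).card + E.card * k' := hgrow
  have hB : (e ∪ f).card + 3 ≤ 2 * (k' + 1) := by omega
  have hk' : 1 ≤ k' := by omega
  linarith
end

section
/- Let F be a connected bicyclic k-uniform hypergraph (n = m(k-1) - 1). Then every two distinct vertices of F share at most three common edges, and every three distinct vertices of F have at most two common edges. -/
open Finset

lemma base_lemma {V : Type*} [DecidableEq V] (r : Finset V) :
    ∀ (S : Finset (Finset V)), (∀ e ∈ S, r ⊆ e) → S.Nonempty →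
      (S.sup id).card + r.card * S.card ≤ r.card + ∑ e ∈ S, e.card := by
  intro S
  induction S using Finset.induction_on with
  | empty => intro _ h; exact absurd h (by simp)
  | insert e S' hnotmem ih =>
    intro hsub _
    rcases S'.eq_empty_or_nonempty with h' | h'
    · subst h'
      simp [Nat.add_comm]
    · have ihh := ih (fun f hf => hsub f (Finset.mem_insert_of_mem hf)) h'
      have hre : r ⊆ e := hsub e (Finset.mem_insert_self e S')
      have hrU : r ⊆ S'.sup id := by
        obtain ⟨f, hf⟩ := h'
        exact (hsub f (Finset.mem_insert_of_mem hf)).trans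
          (Finset.le_sup (f := id) hf)
      have hrcap : r ⊆ e ∩ S'.sup id := Finset.subset_inter hre hrU
      have hcap : r.card ≤ (e ∩ S'.sup id).card := Finset.card_le_card hrcap
      have hu : (e ∪ S'.sup id).card + (e ∩ S'.sup id).card
          = e.card + (S'.sup id).card := Finset.card_union_add_card_inter _ _
      rw [Finset.sup_insert, Finset.sum_insert hnotmem, Finset.card_insert_of_notMem hnotmem]
      have : (id e ⊔ S'.sup id) = e ∪ S'.sup id := rfl
      rw [this]
      have h1 : (e ∪ S'.sup id).card + r.card ≤ e.card + (S'.sup id).card := by omega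
      calc (e ∪ S'.sup id).card + r.card * (S'.card + 1)
          = ((e ∪ S'.sup id).card + r.card) + r.card * S'.card := by ring
        _ ≤ (e.card + (S'.sup id).card) + r.card * S'.card := by omega
        _ = e.card + ((S'.sup id).card + r.card * S'.card) := by ring
        _ ≤ e.card + (r.card + ∑ f ∈ S', f.card) := by omega
        _ = r.card + (e.card + ∑ f ∈ S', f.card) := by ring

lemma grow_s4 {V : Type*} [DecidableEq V] (E : Finset (Finset V))
    (hfind : ∀ T : Finset (Finset V), T ⊆ E → T.Nonempty → T ≠ E →
      ∃ e ∈ E, e ∉ T ∧ (e ∩ T.sup id).Nonempty)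
    (a C : ℕ) :
    ∀ (n : ℕ) (T : Finset (Finset V)), T ⊆ E → T.Nonempty → E.card - T.card ≤ n →
      (T.sup id).card + T.card + a ≤ C + ∑ e ∈ T, e.card →
      (E.sup id).card + E.card + a ≤ C + ∑ e ∈ E, e.card := by
  intro n
  induction n with
  | zero =>
    intro T hTE hne hn hb
    have hle := Finset.card_le_card hTE
    have : T = E := Finset.eq_of_subset_of_card_le hTE (by omega)
    subst this; exact hb
  | succ n ih =>
    intro T hTE hne hn hb
    by_cases hEq : T = E
    · subst hEq; exact hb
    · obtain ⟨e, heE, heT, hint⟩ := hfind T hTE hne hEq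
      have hsub' : insert e T ⊆ E := Finset.insert_subset heE hTE
      have hcard' : (insert e T).card = T.card + 1 := Finset.card_insert_of_notMem heT
      have hcardE : (insert e T).card ≤ E.card := Finset.card_le_card hsub'
      apply ih (insert e T) hsub' ⟨e, Finset.mem_insert_self e T⟩ (by omega)
      have hu : (e ∪ T.sup id).card + (e ∩ T.sup id).card
          = e.card + (T.sup id).card := Finset.card_union_add_card_inter _ _
      have hpos : 1 ≤ (e ∩ T.sup id).card := Finset.card_pos.mpr hint
      rw [Finset.sup_insert, Finset.sum_insert heT, hcard']
      have : (id e ⊔ T.sup id) = e ∪ T.sup id := rfl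
      rw [this]
      omega

/-- in a connected bicyclic k-uniform hypergraph (n = m(k-1) - 1),
every two distinct vertices share at most three edges and every three distinct
vertices share at most two edges. -/
theorem stmt_4 {V : Type*} [Fintype V] [DecidableEq V]
    (E : Finset (Finset V)) (k : ℕ) (hk : 2 ≤ k)
    (huniform : ∀ e ∈ E, e.card = k)
    (hconn : ∀ u v : V, Relation.ReflTransGen (fun a b => ∃ e ∈ E, a ∈ e ∧ b ∈ e) u v)
    (hcyc : Fintype.card V + 1 = E.card * (k - 1)) :
    (∀ u v : V, u ≠ v → (E.filter (fun e => u ∈ e ∧ v ∈ e)).card ≤ 3) ∧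
    (∀ u v w : V, u ≠ v → u ≠ w → v ≠ w →
      (E.filter (fun e => u ∈ e ∧ v ∈ e ∧ w ∈ e)).card ≤ 2) := by
  -- hfind: connectivity on edges
  have hfind : ∀ T : Finset (Finset V), T ⊆ E → T.Nonempty → T ≠ E →
      ∃ e ∈ E, e ∉ T ∧ (e ∩ T.sup id).Nonempty := by
    intro T hTE hne hneq
    obtain ⟨e₀, he₀⟩ := hne
    have he₀E : e₀ ∈ E := hTE he₀
    have he₀ne : e₀.Nonempty := by
      rw [← Finset.card_pos, huniform e₀ he₀E]; omega
    obtain ⟨x, hx⟩ := he₀ne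
    have hTssub : T ⊂ E := hTE.ssubset_of_ne hneq
    obtain ⟨f, hfE, hfT⟩ := Finset.exists_of_ssubset hTssub
    have hfne : f.Nonempty := by
      rw [← Finset.card_pos, huniform f hfE]; omega
    obtain ⟨y, hy⟩ := hfne
    have key : ∀ z : V, Relation.ReflTransGen (fun a b => ∃ e ∈ E, a ∈ e ∧ b ∈ e) x z →
        z ∈ T.sup id ∨ ∃ e ∈ E, e ∉ T ∧ (e ∩ T.sup id).Nonempty := by
      intro z hz
      induction hz with
      | refl => exact Or.inl (Finset.mem_sup.mpr ⟨e₀, he₀, hx⟩)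
      | tail hab hbc ih =>
        rename_i b c
        rcases ih with hb | hq
        · obtain ⟨e, heE, hbe, hce⟩ := hbc
          by_cases heT : e ∈ T
          · exact Or.inl (Finset.mem_sup.mpr ⟨e, heT, hce⟩)
          · exact Or.inr ⟨e, heE, heT, ⟨b, Finset.mem_inter.mpr ⟨hbe, hb⟩⟩⟩
        · exact Or.inr hq
    rcases key y (hconn x y) with hy' | hq
    · exact ⟨f, hfE, hfT, ⟨y, Finset.mem_inter.mpr ⟨hy, hy'⟩⟩⟩
    · exact hq
  -- coverage / basic facts given E nonempty
  have cover : E.Nonempty → Fintype.card V ≤ (E.sup id).card := by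
    intro ⟨e, heE⟩
    have hek : e.card = k := huniform e heE
    have h2V : 2 ≤ Fintype.card V := by
      have := Finset.card_le_card (Finset.subset_univ e)
      rw [hek] at this
      simp only [Finset.card_univ] at this
      omega
    have : Nontrivial V := Fintype.one_lt_card_iff_nontrivial.mp (by omega)
    have huniv : (Finset.univ : Finset V) ⊆ E.sup id := by
      intro v _
      obtain ⟨u, hu⟩ := exists_ne v
      have := hconn v u
      rcases (Relation.ReflTransGen.cases_head this) with heq | ⟨b, ⟨f, hfE, hvf, _⟩, _⟩
      · exact absurd heq.symm hu
      · exact Finset.mem_sup.mpr ⟨f, hfE, hvf⟩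
    calc Fintype.card V = (Finset.univ : Finset V).card := (Finset.card_univ).symm
      _ ≤ (E.sup id).card := Finset.card_le_card huniv
  have hsumE : ∑ e ∈ E, e.card = E.card * k := by
    rw [Finset.sum_congr rfl huniform, Finset.sum_const, smul_eq_mul]
  have hmk : E.card * (k - 1) + E.card = E.card * k := by
    have h1 : k - 1 + 1 = k := by omega
    calc E.card * (k - 1) + E.card = E.card * ((k - 1) + 1) := by ring
      _ = E.card * k := by rw [h1]
  constructor
  · intro u v huv
    set S := E.filter (fun e => u ∈ e ∧ v ∈ e) with hS
    rcases S.eq_empty_or_nonempty with h | hSne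
    · rw [h]; simp
    · have hSsub : S ⊆ E := Finset.filter_subset _ _
      have hr : ∀ e ∈ S, ({u, v} : Finset V) ⊆ e := by
        intro e he
        have := Finset.mem_filter.mp he
        exact Finset.insert_subset this.2.1 (Finset.singleton_subset_iff.mpr this.2.2)
      have hrcard : ({u, v} : Finset V).card = 2 := by
        rw [Finset.card_insert_of_notMem (by simp [huv]), Finset.card_singleton]
      have hbase := base_lemma ({u, v} : Finset V) S hr hSne
      rw [hrcard] at hbase
      have hb' : (S.sup id).card + S.card + S.card ≤ 2 + ∑ e ∈ S, e.card := by omega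
      have hfin := grow_s4 E hfind S.card 2 E.card S hSsub hSne (by omega) hb'
      have hcov := cover (hSne.mono hSsub)
      rw [hsumE] at hfin
      have h2 : E.card * k = Fintype.card V + 1 + E.card := by omega
      rw [h2] at hfin
      omega
  · intro u v w huv huw hvw
    set S := E.filter (fun e => u ∈ e ∧ v ∈ e ∧ w ∈ e) with hS
    rcases S.eq_empty_or_nonempty with h | hSne
    · rw [h]; simp
    · have hSsub : S ⊆ E := Finset.filter_subset _ _
      have hr : ∀ e ∈ S, ({u, v, w} : Finset V) ⊆ e := by
        intro e he
        have h' := Finset.mem_filter.mp he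
        exact Finset.insert_subset h'.2.1 (Finset.insert_subset h'.2.2.1
          (Finset.singleton_subset_iff.mpr h'.2.2.2))
      have hrcard : ({u, v, w} : Finset V).card = 3 := by
        rw [Finset.card_insert_of_notMem (by simp [huv, huw]),
          Finset.card_insert_of_notMem (by simp [hvw]), Finset.card_singleton]
      have hbase := base_lemma ({u, v, w} : Finset V) S hr hSne
      rw [hrcard] at hbase
      have hb' : (S.sup id).card + S.card + 2 * S.card ≤ 3 + ∑ e ∈ S, e.card := by omega
      have hfin := grow_s4 E hfind (2 * S.card) 3 E.card S hSsub hSne (by omega) hb'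
      have hcov := cover (hSne.mono hSsub)
      rw [hsumE] at hfin
      have h2 : E.card * k = Fintype.card V + 1 + E.card := by omega
      rw [h2] at hfin
      omega
end

section
/- Let G₁ be the simple graph on m edges obtained from a triangle C₃ by attaching m−3 pendant edges at one of its vertices. Then the characteristic polynomial of the adjacency matrix of G₁ is φ_{G₁}(x) = x^{m−4}(x+1)(x³ − x² − (m−1)x + m − 3). -/
open Polynomial Matrix Finset

/-- Adjacency matrix of G₁: a triangle on vertices 0,1,2 with m-3 pendant edges
attached at vertex 0; the vertices are 0,…,m-1. -/
def G1adj (m : ℕ) : Matrix (Fin m) (Fin m) ℝ :=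
  Matrix.of fun i j =>
    if i ≠ j ∧ ((i.val ≤ 2 ∧ j.val ≤ 2) ∨ i.val = 0 ∨ j.val = 0) then 1 else 0

/-- `x•1 - G1adj m`, written entrywise. -/
def Bmat (x : ℝ) (n : ℕ) : Matrix (Fin n) (Fin n) ℝ :=
  Matrix.of fun i j => (if i = j then x else 0) - G1adj n i j

/-- `x•1 - E` where `E` is the adjacency matrix of a single edge {0,1} plus isolated
vertices. -/
def Emat (x : ℝ) (n : ℕ) : Matrix (Fin n) (Fin n) ℝ :=
  Matrix.of fun i j => (if i = j then x else 0) -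
    (if (i.val = 0 ∧ j.val = 1) ∨ (i.val = 1 ∧ j.val = 0) then 1 else 0)

lemma detE (x : ℝ) : ∀ k : ℕ, (Emat x (k+2)).det = x ^ k * (x ^ 2 - 1) := by
  intro k
  induction k with
  | zero =>
      rw [Matrix.det_fin_two]
      simp [Emat]
      ring
  | succ k ih =>
      rw [Matrix.det_succ_row (Emat x (k+1+2)) (Fin.last (k+2)),
        Finset.sum_eq_single (Fin.last (k+2))]
      · have hsub : (Emat x (k+1+2)).submatrix (Fin.last (k+2)).succAbove
            (Fin.last (k+2)).succAbove = Emat x (k+2) := by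
          ext i j
          simp [Emat, Fin.succAbove_last, Fin.castSucc_inj]
        rw [hsub, ih]
        have h1 : ((-1 : ℝ)) ^ ((Fin.last (k+2) : ℕ) + (Fin.last (k+2) : ℕ)) = 1 :=
          Even.neg_one_pow ⟨k+2, by simp⟩
        have h2 : Emat x (k+1+2) (Fin.last (k+2)) (Fin.last (k+2)) = x := by
          simp [Emat]
        rw [h1, h2]
        ring
      · intro j _ hj
        have h0 : Emat x (k+1+2) (Fin.last (k+2)) j = 0 := by
          simp [Emat, (Ne.symm hj : Fin.last (k+2) ≠ j), Fin.val_last]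
        rw [h0]
        ring
      · simp

lemma detM1 (x : ℝ) (k : ℕ) :
    ((Bmat x (k+4+1)).submatrix (Fin.last (k+4)).succAbove
      ((0 : Fin (k+4+1)).succAbove)).det = (-1)^k * (x^(k+1) * (x^2 - 1)) := by
  set M := (Bmat x (k+4+1)).submatrix (Fin.last (k+4)).succAbove ((0 : Fin (k+4+1)).succAbove)
    with hM
  rw [Matrix.det_succ_column M (Fin.last (k+3)), Finset.sum_eq_single 0]
  · have hsub : M.submatrix (0 : Fin (k+3+1)).succAbove (Fin.last (k+3)).succAbove
        = Emat x (k+3) := by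
      ext i j
      simp only [hM, Matrix.submatrix_apply, Fin.succAbove_last, Fin.zero_succAbove,
        Bmat, Emat, G1adj, Matrix.of_apply, Fin.ext_iff, Fin.val_succ, Fin.coe_castSucc,
        Fin.val_last, ne_eq]
      split_ifs <;> try rfl
      all_goals simp_all
      all_goals simp only [Fin.ext_iff, Fin.val_zero] at *
      all_goals omega
    have hE : (Emat x (k+3)).det = x^(k+1) * (x^2-1) := detE x (k+1)
    rw [hsub, hE]
    have h0 : M 0 (Fin.last (k+3)) = -1 := by
      simp only [hM, Matrix.submatrix_apply, Fin.succAbove_last, Fin.zero_succAbove,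
        Bmat, G1adj, Matrix.of_apply, Fin.ext_iff, Fin.coe_castSucc, Fin.val_succ,
        Fin.val_last, ne_eq]
      norm_num
    rw [h0]
    have hv : (((0 : Fin (k+3+1)) : ℕ) + ((Fin.last (k+3)) : ℕ)) = k + 3 := by simp
    rw [hv]
    have key : ((-1:ℝ))^(k+3) = -(-1)^k := by rw [pow_add]; ring
    rw [key]
    ring
  · intro i _ hi
    have hi' : i.val ≠ 0 := by intro h; exact hi (Fin.ext (by simp [h]))
    have hlt : i.val < k + 4 := i.isLt
    have h0 : M i (Fin.last (k+3)) = 0 := by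
      simp only [hM, Matrix.submatrix_apply, Fin.succAbove_last, Fin.zero_succAbove,
        Bmat, G1adj, Matrix.of_apply, Fin.ext_iff, Fin.coe_castSucc, Fin.val_succ,
        Fin.val_last, ne_eq]
      split_ifs <;> try rfl
      all_goals simp_all
    rw [h0]; ring
  · simp

lemma detB (x : ℝ) : ∀ m : ℕ, 4 ≤ m → (Bmat x m).det =
    x ^ (m-4) * (x+1) * (x^3 - x^2 - ((m:ℝ)-1) * x + ((m:ℝ)-3)) := by
  intro m hm
  induction m, hm using Nat.le_induction with
  | base =>
      have hB : Bmat x 4 = !![x, -1, -1, -1; -1, x, -1, 0; -1, -1, x, 0; -1, 0, 0, x] := by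
        ext i j; fin_cases i <;> fin_cases j <;> simp [Bmat, G1adj]
      rw [hB, Matrix.det_succ_row_zero]
      simp [Fin.sum_univ_succ, Matrix.det_fin_three, Fin.succAbove]
      ring
  | succ m hm ih =>
      obtain ⟨k, rfl⟩ : ∃ k, m = k + 4 := ⟨m - 4, by omega⟩
      rw [Matrix.det_succ_row (Bmat x (k+4+1)) (Fin.last (k+4)),
        ← Finset.add_sum_erase _ _ (Finset.mem_univ (0 : Fin (k+4+1))),
        Finset.sum_eq_single_of_mem (Fin.last (k+4))
          (by simp [Finset.mem_erase, Fin.ext_iff])]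
      · -- main terms
        have hsub : (Bmat x (k+4+1)).submatrix (Fin.last (k+4)).succAbove
            (Fin.last (k+4)).succAbove = Bmat x (k+4) := by
          ext i j
          simp only [Matrix.submatrix_apply, Fin.succAbove_last, Bmat, G1adj,
            Matrix.of_apply, Fin.ext_iff, Fin.coe_castSucc, ne_eq]
        have hll : Bmat x (k+4+1) (Fin.last (k+4)) (Fin.last (k+4)) = x := by
          simp [Bmat, G1adj]
        have hl0 : Bmat x (k+4+1) (Fin.last (k+4)) 0 = -1 := by
          simp only [Bmat, G1adj, Matrix.of_apply, Fin.ext_iff, Fin.val_last,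
            Fin.val_zero, ne_eq]
          split_ifs <;> try norm_num
          all_goals simp_all
        rw [hsub, hll, hl0, detM1, ih]
        have hv1 : ((Fin.last (k+4) : ℕ) + ((0 : Fin (k+4+1)) : ℕ)) = k + 4 := by simp
        have hv2 : ((Fin.last (k+4) : ℕ) + ((Fin.last (k+4)) : ℕ)) = 2*(k+2)+2*2 := by
          simp; ring
        rw [hv1, hv2]
        have key1 : ((-1:ℝ))^(k+4) = (-1)^k := by rw [pow_add]; norm_num
        have key2 : ((-1:ℝ))^(2*(k+2)+2*2) = 1 := Even.neg_one_pow ⟨k+4, by ring⟩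
        rw [key1, key2]
        have key3 : ((-1:ℝ))^k * (-1)^k = 1 := by
          rw [← pow_add]; exact Even.neg_one_pow ⟨k, by ring⟩
        have e1 : (k+4+1) - 4 = k+1 := by omega
        have e2 : (k+4) - 4 = k := by omega
        rw [e1, e2]
        push_cast
        linear_combination (-(x^(k+1) * (x^2-1))) * key3
      · -- other entries in the last row vanish
        intro j hj hjl
        have hj0 : j ≠ 0 := (Finset.mem_erase.mp hj).1
        have h0 : Bmat x (k+4+1) (Fin.last (k+4)) j = 0 := by
          have h1 : j.val ≠ 0 := by intro h; exact hj0 (Fin.ext (by simp [h]))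
          have h2 : j.val ≠ k+4 := by simpa [Fin.ext_iff] using hjl
          simp only [Bmat, G1adj, Matrix.of_apply, Fin.ext_iff, Fin.val_last, ne_eq]
          split_ifs <;> try rfl
          all_goals simp_all
        rw [h0]; ring

lemma evalCharpoly {n : ℕ} (M : Matrix (Fin n) (Fin n) ℝ) (x : ℝ) :
    M.charpoly.eval x =
      (Matrix.of fun i j => (if i = j then x else 0) - M i j).det := by
  rw [Matrix.charpoly, ← Polynomial.coe_evalRingHom, RingHom.map_det]
  congr 1
  ext i j
  by_cases h : i = j <;>
    simp [h, Matrix.charmatrix_apply_eq, Matrix.charmatrix_apply_ne, Matrix.map_apply]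

/-- φ_{G₁}(x) = x^{m-4}(x+1)(x³ - x² - (m-1)x + m - 3). -/
theorem stmt_6 (m : ℕ) (hm : 4 ≤ m) :
    (G1adj m).charpoly =
      X ^ (m - 4) * (X + 1) *
        (X ^ 3 - X ^ 2 - C ((m : ℝ) - 1) * X + C ((m : ℝ) - 3)) := by
  apply Polynomial.funext
  intro x
  rw [evalCharpoly]
  show (Bmat x m).det = _
  rw [detB x m hm]
  simp [eval_mul, eval_pow, eval_add, eval_sub, eval_C, eval_X]
end

section
/- Let G(a,b) be the multigraph consisting of two vertices u,v joined by two parallel edges, with a pendant edges attached at u and b pendant edges attached at v, where a + b = m − 2. Then the characteristic polynomial of its adjacency matrix is φ_{G(a,b)}(x) = x^{m−4}(x⁴ − (m+2)x² + ab). In particular, the spectral radius satisfies ρ(G(a,b))² = (m + 2 + √((m+2)² − 4ab))/2. -/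
open Polynomial

open Matrix

lemma eval_charpoly' {n : Type*} [Fintype n] [DecidableEq n] (M : Matrix n n ℝ) (x : ℝ) :
    (M.charpoly).eval x = (x • (1 : Matrix n n ℝ) - M).det := by
  rw [Matrix.charpoly, ← Polynomial.coe_evalRingHom, RingHom.map_det]
  congr 1
  ext i j
  by_cases h : i = j <;>
    simp [h, Matrix.charmatrix_apply, Matrix.one_apply, Matrix.diagonal_apply]

lemma det_key {k n : ℕ} (hk : k ≤ n) (A : Matrix (Fin n) (Fin k) ℝ)
    (B : Matrix (Fin k) (Fin n) ℝ) (x : ℝ) (hx : x ≠ 0) :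
    (x • (1 : Matrix (Fin n) (Fin n) ℝ) - A * B).det
      = x ^ (n - k) * (x • (1 : Matrix (Fin k) (Fin k) ℝ) - B * A).det := by
  have h1 : x • (1 : Matrix (Fin n) (Fin n) ℝ) - A * B
      = x • ((1 : Matrix (Fin n) (Fin n) ℝ) - (x⁻¹ • A) * B) := by
    rw [smul_sub, Matrix.smul_mul, smul_smul, mul_inv_cancel₀ hx, one_smul]
  have h2 : (1 : Matrix (Fin k) (Fin k) ℝ) - B * (x⁻¹ • A)
      = x⁻¹ • (x • (1 : Matrix (Fin k) (Fin k) ℝ) - B * A) := by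
    rw [smul_sub, smul_smul, inv_mul_cancel₀ hx, one_smul, Matrix.mul_smul]
  rw [h1, Matrix.det_smul, Matrix.det_one_sub_mul_comm, h2, Matrix.det_smul,
    Fintype.card_fin, Fintype.card_fin]
  rw [← mul_assoc]
  congr 1
  rw [inv_pow, pow_sub₀ x hx hk]

/-- Adjacency matrix of the multigraph G(a,b): vertices u = 0 and v = 1 joined by two
parallel edges, a pendant edges at u (vertices 2,…,a+1) and b pendant edges at v
(vertices a+2,…,a+b+1). -/
def Gab (a b : ℕ) : Matrix (Fin (a + b + 2)) (Fin (a + b + 2)) ℝ :=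
  Matrix.of fun i j =>
    if (i.val = 0 ∧ j.val = 1) ∨ (i.val = 1 ∧ j.val = 0) then 2
    else if (i.val = 0 ∧ 2 ≤ j.val ∧ j.val ≤ a + 1) ∨
            (j.val = 0 ∧ 2 ≤ i.val ∧ i.val ≤ a + 1) then 1
    else if (i.val = 1 ∧ a + 2 ≤ j.val) ∨ (j.val = 1 ∧ a + 2 ≤ i.val) then 1
    else 0

def Pm (a b : ℕ) : Matrix (Fin (a + b + 2)) (Fin 4) ℝ :=
  Matrix.of fun i => ![if i.val = 0 then 1 else 0, if i.val = 1 then 1 else 0,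
    if 2 ≤ i.val ∧ i.val ≤ a + 1 then 1 else 0, if a + 2 ≤ i.val then 1 else 0]
def Qm (a b : ℕ) : Matrix (Fin 4) (Fin (a + b + 2)) ℝ :=
  Matrix.of fun k j =>
    ![if j.val = 1 then 2 else if 2 ≤ j.val ∧ j.val ≤ a + 1 then 1 else 0,
      if j.val = 0 then 2 else if a + 2 ≤ j.val then 1 else 0,
      if j.val = 0 then 1 else 0,
      if j.val = 1 then 1 else 0] k

lemma Gab_eq (a b : ℕ) : Gab a b = Pm a b * Qm a b := by
  ext i j
  rw [Matrix.mul_apply, Fin.sum_univ_four]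
  simp only [Pm, Qm, Gab, Matrix.of_apply, Matrix.cons_val_zero, Matrix.cons_val_one,
    Matrix.head_cons, Matrix.cons_val_two, Matrix.tail_cons, Matrix.cons_val_three]
  have hcase : i.val = 0 ∨ i.val = 1 ∨ (2 ≤ i.val ∧ i.val ≤ a + 1) ∨ a + 2 ≤ i.val := by
    have := i.isLt; omega
  have hj := j.isLt
  rcases hcase with hi | hi | hi | hi <;>
    [ (have h1 : ¬ i.val = 1 := by omega;
       have h2 : ¬ (2 ≤ i.val ∧ i.val ≤ a + 1) := by omega;
       have h3 : ¬ a + 2 ≤ i.val := by omega;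
       simp only [hi, h1, h2, h3, if_true, if_false, ite_false, ite_true, if_pos rfl]);
      (have h1 : ¬ i.val = 0 := by omega;
       have h2 : ¬ (2 ≤ i.val ∧ i.val ≤ a + 1) := by omega;
       have h3 : ¬ a + 2 ≤ i.val := by omega;
       simp only [hi, h1, h2, h3, if_true, if_false, ite_false, ite_true, if_pos rfl]);
      (have h1 : ¬ i.val = 0 := by omega;
       have h2 : ¬ i.val = 1 := by omega;
       have h3 : ¬ a + 2 ≤ i.val := by omega;
       simp only [h1, h2, h3, if_pos hi, if_false, ite_false]);
      (have h1 : ¬ i.val = 0 := by omega;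
       have h2 : ¬ i.val = 1 := by omega;
       have h3 : ¬ (2 ≤ i.val ∧ i.val ≤ a + 1) := by omega;
       simp only [h1, h2, h3, if_pos hi, if_false, ite_false])] <;>
    norm_num <;>
    split_ifs <;> norm_num <;> omega

lemma sum_ind (n c : ℕ) (hc : c < n) (r : ℝ) :
    ∑ j : Fin n, (if j.val = c then r else 0) = r := by
  rw [Fin.sum_univ_eq_sum_range (fun j => if j = c then r else 0) n]
  rw [Finset.sum_ite_eq' (Finset.range n) c (fun _ => r), if_pos (Finset.mem_range.mpr hc)]

lemma sum_A (a b : ℕ) :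
    ∑ j : Fin (a + b + 2), (if 2 ≤ j.val ∧ j.val ≤ a + 1 then (1:ℝ) else 0) = a := by
  rw [Fin.sum_univ_eq_sum_range (fun j => if 2 ≤ j ∧ j ≤ a + 1 then (1:ℝ) else 0) (a+b+2),
    Finset.sum_boole]
  have : ((Finset.range (a+b+2)).filter (fun j => 2 ≤ j ∧ j ≤ a + 1)) = Finset.Ico 2 (a+2) := by
    ext x; simp only [Finset.mem_filter, Finset.mem_range, Finset.mem_Ico]; omega
  rw [this, Nat.card_Ico]
  norm_num

lemma sum_B (a b : ℕ) :
    ∑ j : Fin (a + b + 2), (if a + 2 ≤ j.val then (1:ℝ) else 0) = b := by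
  rw [Fin.sum_univ_eq_sum_range (fun j => if a + 2 ≤ j then (1:ℝ) else 0) (a+b+2),
    Finset.sum_boole]
  have : ((Finset.range (a+b+2)).filter (fun j => a + 2 ≤ j)) = Finset.Ico (a+2) (a+b+2) := by
    ext x; simp only [Finset.mem_filter, Finset.mem_range, Finset.mem_Ico]; omega
  rw [this, Nat.card_Ico]
  norm_num

lemma det4 (a b : ℕ) (x : ℝ) :
    (x • (1 : Matrix (Fin 4) (Fin 4) ℝ) - Qm a b * Pm a b).det
      = x ^ 4 - ((a:ℝ) + b + 4) * x ^ 2 + a * b := by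
  have e00 : (Qm a b * Pm a b) 0 0 = 0 := by
    rw [Matrix.mul_apply]
    rw [Finset.sum_eq_zero]
    intro j _
    simp only [Pm, Qm, Matrix.of_apply, Matrix.cons_val_zero]
    split_ifs <;> norm_num <;> omega
  have e01 : (Qm a b * Pm a b) 0 1 = 2 := by
    rw [Matrix.mul_apply,
      Finset.sum_congr rfl (fun j _ => show Qm a b 0 j * Pm a b j 1 = if j.val = 1 then (2:ℝ) else 0 by
        simp only [Pm, Qm, Matrix.of_apply, Matrix.cons_val_zero, Matrix.cons_val_one, Matrix.head_cons]
        split_ifs <;> norm_num <;> omega),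
      sum_ind _ 1 (by omega)]
  have e02 : (Qm a b * Pm a b) 0 2 = a := by
    rw [Matrix.mul_apply,
      Finset.sum_congr rfl (fun j _ => show Qm a b 0 j * Pm a b j 2 = if 2 ≤ j.val ∧ j.val ≤ a + 1 then (1:ℝ) else 0 by
        simp only [Pm, Qm, Matrix.of_apply, Matrix.cons_val_zero, Matrix.cons_val_two, Matrix.tail_cons, Matrix.head_cons]
        split_ifs <;> norm_num <;> omega),
      sum_A]
  have e03 : (Qm a b * Pm a b) 0 3 = 0 := by
    rw [Matrix.mul_apply, Finset.sum_eq_zero]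
    intro j _
    simp only [Pm, Qm, Matrix.of_apply, Matrix.cons_val_zero, Matrix.cons_val_three, Matrix.tail_cons, Matrix.head_cons]
    split_ifs <;> norm_num <;> omega
  have e10 : (Qm a b * Pm a b) 1 0 = 2 := by
    rw [Matrix.mul_apply,
      Finset.sum_congr rfl (fun j _ => show Qm a b 1 j * Pm a b j 0 = if j.val = 0 then (2:ℝ) else 0 by
        simp only [Pm, Qm, Matrix.of_apply, Matrix.cons_val_zero, Matrix.cons_val_one, Matrix.head_cons]
        split_ifs <;> norm_num <;> omega),
      sum_ind _ 0 (by omega)]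
  have e11 : (Qm a b * Pm a b) 1 1 = 0 := by
    rw [Matrix.mul_apply, Finset.sum_eq_zero]
    intro j _
    simp only [Pm, Qm, Matrix.of_apply, Matrix.cons_val_one, Matrix.head_cons]
    split_ifs <;> norm_num <;> omega
  have e12 : (Qm a b * Pm a b) 1 2 = 0 := by
    rw [Matrix.mul_apply, Finset.sum_eq_zero]
    intro j _
    simp only [Pm, Qm, Matrix.of_apply, Matrix.cons_val_one, Matrix.cons_val_two, Matrix.tail_cons, Matrix.head_cons]
    split_ifs <;> norm_num <;> omega
  have e13 : (Qm a b * Pm a b) 1 3 = b := by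
    rw [Matrix.mul_apply,
      Finset.sum_congr rfl (fun j _ => show Qm a b 1 j * Pm a b j 3 = if a + 2 ≤ j.val then (1:ℝ) else 0 by
        simp only [Pm, Qm, Matrix.of_apply, Matrix.cons_val_one, Matrix.cons_val_three, Matrix.tail_cons, Matrix.head_cons]
        split_ifs <;> norm_num <;> omega),
      sum_B]
  have e20 : (Qm a b * Pm a b) 2 0 = 1 := by
    rw [Matrix.mul_apply,
      Finset.sum_congr rfl (fun j _ => show Qm a b 2 j * Pm a b j 0 = if j.val = 0 then (1:ℝ) else 0 by
        simp only [Pm, Qm, Matrix.of_apply, Matrix.cons_val_zero, Matrix.cons_val_two, Matrix.tail_cons, Matrix.head_cons]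
        split_ifs <;> norm_num <;> omega),
      sum_ind _ 0 (by omega)]
  have e21 : (Qm a b * Pm a b) 2 1 = 0 := by
    rw [Matrix.mul_apply, Finset.sum_eq_zero]
    intro j _
    simp only [Pm, Qm, Matrix.of_apply, Matrix.cons_val_one, Matrix.cons_val_two, Matrix.tail_cons, Matrix.head_cons]
    split_ifs <;> norm_num <;> omega
  have e22 : (Qm a b * Pm a b) 2 2 = 0 := by
    rw [Matrix.mul_apply, Finset.sum_eq_zero]
    intro j _
    simp only [Pm, Qm, Matrix.of_apply, Matrix.cons_val_two, Matrix.tail_cons, Matrix.head_cons]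
    split_ifs <;> norm_num <;> omega
  have e23 : (Qm a b * Pm a b) 2 3 = 0 := by
    rw [Matrix.mul_apply, Finset.sum_eq_zero]
    intro j _
    simp only [Pm, Qm, Matrix.of_apply, Matrix.cons_val_two, Matrix.cons_val_three, Matrix.tail_cons, Matrix.head_cons]
    split_ifs <;> norm_num <;> omega
  have e30 : (Qm a b * Pm a b) 3 0 = 0 := by
    rw [Matrix.mul_apply, Finset.sum_eq_zero]
    intro j _
    simp only [Pm, Qm, Matrix.of_apply, Matrix.cons_val_zero, Matrix.cons_val_three, Matrix.tail_cons, Matrix.head_cons]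
    split_ifs <;> norm_num <;> omega
  have e31 : (Qm a b * Pm a b) 3 1 = 1 := by
    rw [Matrix.mul_apply,
      Finset.sum_congr rfl (fun j _ => show Qm a b 3 j * Pm a b j 1 = if j.val = 1 then (1:ℝ) else 0 by
        simp only [Pm, Qm, Matrix.of_apply, Matrix.cons_val_one, Matrix.cons_val_three, Matrix.tail_cons, Matrix.head_cons]
        split_ifs <;> norm_num <;> omega),
      sum_ind _ 1 (by omega)]
  have e32 : (Qm a b * Pm a b) 3 2 = 0 := by
    rw [Matrix.mul_apply, Finset.sum_eq_zero]
    intro j _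
    simp only [Pm, Qm, Matrix.of_apply, Matrix.cons_val_two, Matrix.cons_val_three, Matrix.tail_cons, Matrix.head_cons]
    split_ifs <;> norm_num <;> omega
  have e33 : (Qm a b * Pm a b) 3 3 = 0 := by
    rw [Matrix.mul_apply, Finset.sum_eq_zero]
    intro j _
    simp only [Pm, Qm, Matrix.of_apply, Matrix.cons_val_three, Matrix.tail_cons, Matrix.head_cons]
    split_ifs <;> norm_num <;> omega
  have hone : (1 : Matrix (Fin 4) (Fin 4) ℝ) = !![1,0,0,0;0,1,0,0;0,0,1,0;0,0,0,1] := by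
    ext i j; fin_cases i <;> fin_cases j <;> rfl
  have det_fin_four : ∀ (A : Matrix (Fin 4) (Fin 4) ℝ), A.det =
      A 0 0 * (A 1 1 * A 2 2 * A 3 3 - A 1 1 * A 2 3 * A 3 2 - A 1 2 * A 2 1 * A 3 3
        + A 1 2 * A 2 3 * A 3 1 + A 1 3 * A 2 1 * A 3 2 - A 1 3 * A 2 2 * A 3 1)
      - A 0 1 * (A 1 0 * A 2 2 * A 3 3 - A 1 0 * A 2 3 * A 3 2 - A 1 2 * A 2 0 * A 3 3
        + A 1 2 * A 2 3 * A 3 0 + A 1 3 * A 2 0 * A 3 2 - A 1 3 * A 2 2 * A 3 0)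
      + A 0 2 * (A 1 0 * A 2 1 * A 3 3 - A 1 0 * A 2 3 * A 3 1 - A 1 1 * A 2 0 * A 3 3
        + A 1 1 * A 2 3 * A 3 0 + A 1 3 * A 2 0 * A 3 1 - A 1 3 * A 2 1 * A 3 0)
      - A 0 3 * (A 1 0 * A 2 1 * A 3 2 - A 1 0 * A 2 2 * A 3 1 - A 1 1 * A 2 0 * A 3 2
        + A 1 1 * A 2 2 * A 3 0 + A 1 2 * A 2 0 * A 3 1 - A 1 2 * A 2 1 * A 3 0) := by
    intro A
    rw [Matrix.det_succ_row_zero, Fin.sum_univ_four]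
    have s00 : (0:Fin 4).succAbove 0 = 1 := rfl
    have s01 : (0:Fin 4).succAbove 1 = 2 := rfl
    have s02 : (0:Fin 4).succAbove 2 = 3 := rfl
    have s10 : (1:Fin 4).succAbove 0 = 0 := rfl
    have s11 : (1:Fin 4).succAbove 1 = 2 := rfl
    have s12 : (1:Fin 4).succAbove 2 = 3 := rfl
    have s20 : (2:Fin 4).succAbove 0 = 0 := rfl
    have s21 : (2:Fin 4).succAbove 1 = 1 := rfl
    have s22 : (2:Fin 4).succAbove 2 = 3 := rfl
    have s30 : (3:Fin 4).succAbove 0 = 0 := rfl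
    have s31 : (3:Fin 4).succAbove 1 = 1 := rfl
    have s32 : (3:Fin 4).succAbove 2 = 2 := rfl
    have r0 : Fin.succ (0 : Fin 3) = 1 := rfl
    have r1 : Fin.succ (1 : Fin 3) = 2 := rfl
    have r2 : Fin.succ (2 : Fin 3) = 3 := rfl
    have v3 : ((3 : Fin 4) : ℕ) = 3 := rfl
    have v2 : ((2 : Fin 4) : ℕ) = 2 := rfl
    have v1 : ((1 : Fin 4) : ℕ) = 1 := rfl
    have v0 : ((0 : Fin 4) : ℕ) = 0 := rfl
    simp only [Matrix.det_fin_three, Matrix.submatrix_apply, s00, s01, s02, s10, s11, s12,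
      s20, s21, s22, s30, s31, s32, r0, r1, r2, v0, v1, v2, v3]
    norm_num
    ring
  rw [det_fin_four]
  simp only [Matrix.sub_apply, Matrix.smul_apply, Matrix.one_apply, smul_eq_mul,
    e00, e01, e02, e03, e10, e11, e12, e13, e20, e21, e22, e23, e30, e31, e32, e33]
  have v3 : ((3 : Fin 4) : ℕ) = 3 := rfl
  have v2 : ((2 : Fin 4) : ℕ) = 2 := rfl
  have v1 : ((1 : Fin 4) : ℕ) = 1 := rfl
  have v0 : ((0 : Fin 4) : ℕ) = 0 := rfl
  norm_num [Fin.ext_iff, v0, v1, v2, v3]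
  ring

lemma charpoly_Gab (a b : ℕ) (hab : 4 ≤ a + b + 2) :
    (Gab a b).charpoly =
      X ^ (a + b + 2 - 4) * (X ^ 4 - C ((a:ℝ) + b + 4) * X ^ 2 + C ((a : ℝ) * b)) := by
  apply Polynomial.eq_of_infinite_eval_eq
  apply Set.Infinite.mono (s := {x : ℝ | x ≠ 0})
  swap
  · have h := (Set.finite_singleton (0:ℝ)).infinite_compl
    have he : ({0}ᶜ : Set ℝ) = {x : ℝ | x ≠ 0} := by
      ext y; simp
    rwa [he] at h
  intro x hx
  have hx : x ≠ 0 := hx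
  simp only [Set.mem_setOf_eq]
  rw [eval_charpoly', Gab_eq, det_key (by omega) (Pm a b) (Qm a b) x hx, det4]
  simp only [eval_mul, eval_pow, eval_X, eval_sub, eval_add, eval_C]
  try ring

/-- φ_{G(a,b)}(x) = x^{m-4}(x⁴ - (m+2)x² + ab), and
ρ(G(a,b))² = (m + 2 + √((m+2)² - 4ab))/2, where ρ is the largest root of φ. -/
theorem stmt_7 (a b m : ℕ) (hm : m = a + b + 2) (h4 : 4 ≤ m) :
    (Gab a b).charpoly =
      X ^ (m - 4) * (X ^ 4 - C ((m : ℝ) + 2) * X ^ 2 + C ((a : ℝ) * b)) ∧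
    IsGreatest {x : ℝ | (Gab a b).charpoly.IsRoot x}
      (Real.sqrt (((m : ℝ) + 2 + Real.sqrt (((m : ℝ) + 2) ^ 2 - 4 * a * b)) / 2)) := by
  subst hm
  have hcm : ((a + b + 2 : ℕ) : ℝ) + 2 = (a : ℝ) + b + 4 := by push_cast; ring
  have hcp : (Gab a b).charpoly =
      X ^ (a + b + 2 - 4) * (X ^ 4 - C (((a + b + 2 : ℕ) : ℝ) + 2) * X ^ 2 + C ((a : ℝ) * b)) := by
    rw [charpoly_Gab a b (by omega), hcm]
  refine ⟨hcp, ?_, ?_⟩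
  · -- membership
    set c : ℝ := ((a + b + 2 : ℕ) : ℝ) + 2 with hc
    have hc' : c = (a : ℝ) + b + 4 := hcm
    have hD : 0 ≤ c ^ 2 - 4 * a * b := by
      rw [hc']; nlinarith [sq_nonneg ((a : ℝ) - b)]
    set s : ℝ := Real.sqrt (c ^ 2 - 4 * a * b) with hsdef
    have hs0 : 0 ≤ s := Real.sqrt_nonneg _
    have hs2 : s ^ 2 = c ^ 2 - 4 * a * b := Real.sq_sqrt hD
    have ht0 : 0 ≤ (c + s) / 2 := by
      have : 0 ≤ c := by rw [hc']; positivity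
      linarith
    set ρ : ℝ := Real.sqrt ((c + s) / 2) with hρdef
    have hρ2 : ρ ^ 2 = (c + s) / 2 := Real.sq_sqrt ht0
    show (Gab a b).charpoly.IsRoot ρ
    rw [hcp, IsRoot.def]
    simp only [eval_mul, eval_pow, eval_X, eval_sub, eval_add, eval_C]
    have : ρ ^ 4 - c * ρ ^ 2 + (a : ℝ) * b = 0 := by
      have h4 : ρ ^ 4 = ((c + s) / 2) ^ 2 := by
        rw [show ρ ^ 4 = (ρ ^ 2) ^ 2 by ring, hρ2]
      rw [h4, hρ2]; nlinarith [hs2]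
    rw [this, mul_zero]
  · -- upper bound
    intro x hx
    set c : ℝ := ((a + b + 2 : ℕ) : ℝ) + 2 with hc
    have hc' : c = (a : ℝ) + b + 4 := hcm
    have hD : 0 ≤ c ^ 2 - 4 * a * b := by
      rw [hc']; nlinarith [sq_nonneg ((a : ℝ) - b)]
    set s : ℝ := Real.sqrt (c ^ 2 - 4 * a * b) with hsdef
    have hs0 : 0 ≤ s := Real.sqrt_nonneg _
    have hs2 : s ^ 2 = c ^ 2 - 4 * a * b := Real.sq_sqrt hD
    have hc0 : 0 ≤ c := by rw [hc']; positivity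
    have hroot : x ^ (a + b + 2 - 4) * (x ^ 4 - c * x ^ 2 + (a : ℝ) * b) = 0 := by
      have := hx
      rw [Set.mem_setOf_eq, hcp, IsRoot.def] at this
      simpa [eval_mul, eval_pow, eval_sub, eval_add, eval_C] using this
    have hx2 : x ^ 2 ≤ (c + s) / 2 := by
      rcases mul_eq_zero.mp hroot with h | h
      · have hx0 : x = 0 := (pow_eq_zero_iff'.mp h).1
        rw [hx0]
        have : (0:ℝ) ≤ (c + s) / 2 := by linarith
        simpa using this
      · by_contra hcon
        push_neg at hcon
        have h1 : 0 < x ^ 2 - (c + s) / 2 := by linarith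
        have h2 : 0 < x ^ 2 - (c - s) / 2 := by linarith
        nlinarith [mul_pos h1 h2]
    calc x ≤ |x| := le_abs_self x
      _ = Real.sqrt (x ^ 2) := (Real.sqrt_sq_eq_abs x).symm
      _ ≤ Real.sqrt ((c + s) / 2) := Real.sqrt_le_sqrt hx2
end

section
/- Let m ≥ 6 and let ρ be the largest real root of x³ − x² − (m−1)x + (m−3) = 0. Then ρ⁴ − (m+2)ρ² + 2(m−4) < 0; consequently ρ is strictly less than the largest root of x⁴ − (m+2)x² + 2(m−4) = 0, namely √((m + 2 + √(m² − 4m + 36))/2). -/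
/-- for m ≥ 6, the largest real root ρ of x³ - x² - (m-1)x + (m-3)
satisfies ρ⁴ - (m+2)ρ² + 2(m-4) < 0, hence ρ < √((m + 2 + √(m² - 4m + 36))/2). -/
theorem stmt_10 (m ρ : ℝ) (hm : 6 ≤ m)
    (hρ : IsGreatest {x : ℝ | x ^ 3 - x ^ 2 - (m - 1) * x + (m - 3) = 0} ρ) :
    ρ ^ 4 - (m + 2) * ρ ^ 2 + 2 * (m - 4) < 0 ∧
    ρ < Real.sqrt ((m + 2 + Real.sqrt (m ^ 2 - 4 * m + 36)) / 2) := by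
  obtain ⟨hmem, hub⟩ := hρ
  have hρroot : ρ ^ 3 - ρ ^ 2 - (m - 1) * ρ + (m - 3) = 0 := hmem
  set s := Real.sqrt (m - 1) with hs
  have hm1 : (0:ℝ) ≤ m - 1 := by linarith
  have hs2 : s ^ 2 = m - 1 := Real.sq_sqrt hm1
  have hs0 : 0 ≤ s := Real.sqrt_nonneg _
  have hs2' : 2 ≤ s := by
    have : Real.sqrt 4 ≤ s := Real.sqrt_le_sqrt (by linarith)
    have h4 : Real.sqrt 4 = 2 := by
      rw [show (4:ℝ) = 2 ^ 2 by norm_num, Real.sqrt_sq (by norm_num : (0:ℝ) ≤ 2)]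
    linarith [h4 ▸ this]
  have hsm : s ≤ m := by nlinarith [hs2]
  have hf : ContinuousOn (fun x : ℝ => x ^ 3 - x ^ 2 - (m - 1) * x + (m - 3))
      (Set.Icc s m) := by fun_prop
  have hfs : s ^ 3 - s ^ 2 - (m - 1) * s + (m - 3) = -2 := by
    have h3 : s ^ 3 = (m - 1) * s := by nlinarith [hs2]
    rw [h3, hs2]; ring
  have hfm : (0:ℝ) ≤ m ^ 3 - m ^ 2 - (m - 1) * m + (m - 3) := by nlinarith
  have h0 : (0:ℝ) ∈ Set.Icc (s ^ 3 - s ^ 2 - (m - 1) * s + (m - 3))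
      (m ^ 3 - m ^ 2 - (m - 1) * m + (m - 3)) := ⟨by rw [hfs]; norm_num, hfm⟩
  obtain ⟨x, hx, hfx⟩ := intermediate_value_Icc hsm hf h0
  have hxroot : x ∈ {x : ℝ | x ^ 3 - x ^ 2 - (m - 1) * x + (m - 3) = 0} := hfx
  have hxs : s < x := lt_of_le_of_ne hx.1 (by
    rintro rfl
    simp only at hfx
    rw [hfs] at hfx
    norm_num at hfx)
  have hρs : s < ρ := lt_of_lt_of_le hxs (hub hxroot)
  have hE : ρ ^ 4 - (m + 2) * ρ ^ 2 + 2 * (m - 4) = -2 * ρ ^ 2 + 2 * ρ + m - 5 := by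
    linear_combination (ρ + 1) * hρroot
  have key : ρ ^ 4 - (m + 2) * ρ ^ 2 + 2 * (m - 4) < 0 := by
    rw [hE]
    nlinarith [mul_pos (sub_pos.2 hρs) (by linarith : (0:ℝ) < ρ + s - 1), hs2,
      sq_nonneg (s - 1)]
  refine ⟨key, ?_⟩
  have hD0 : (0:ℝ) ≤ m ^ 2 - 4 * m + 36 := by nlinarith
  have hD2 : Real.sqrt (m ^ 2 - 4 * m + 36) ^ 2 = m ^ 2 - 4 * m + 36 := Real.sq_sqrt hD0
  have hDn : 0 ≤ Real.sqrt (m ^ 2 - 4 * m + 36) := Real.sqrt_nonneg _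
  have hρ0 : (0:ℝ) ≤ ρ := by linarith
  have hρ2t : ρ ^ 2 < (m + 2 + Real.sqrt (m ^ 2 - 4 * m + 36)) / 2 := by
    by_contra h
    push_neg at h
    have h1 : 0 ≤ ρ ^ 2 - (m + 2 + Real.sqrt (m ^ 2 - 4 * m + 36)) / 2 := by linarith
    have h2 : 0 ≤ ρ ^ 2 - (m + 2 - Real.sqrt (m ^ 2 - 4 * m + 36)) / 2 := by linarith
    nlinarith [mul_nonneg h1 h2, key, hD2]
  have := (Real.lt_sqrt hρ0).2 hρ2t
  exact this
end

section
/- Suppose ρ is the largest root of x³ = x² + (m−1)x − (m−3) and ρ > √(m−1), m ≥ 6. Then ρ⁴ − (m+2)ρ² + 2(m−4) = −2(ρ − 1/2)² + m − 9/2 < 0. -/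
/-- if ρ³ = ρ² + (m-1)ρ - (m-3) with ρ > √(m-1) and m ≥ 6, then
ρ⁴ - (m+2)ρ² + 2(m-4) = -2(ρ - 1/2)² + m - 9/2 < 0. -/
theorem stmt_11 (m ρ : ℝ) (hm : 6 ≤ m)
    (hcubic : ρ ^ 3 = ρ ^ 2 + (m - 1) * ρ - (m - 3))
    (hρ : ρ > Real.sqrt (m - 1)) :
    ρ ^ 4 - (m + 2) * ρ ^ 2 + 2 * (m - 4) = -2 * (ρ - 1 / 2) ^ 2 + m - 9 / 2 ∧
    -2 * (ρ - 1 / 2) ^ 2 + m - 9 / 2 < 0 := by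
  have hs : Real.sqrt (m - 1) ^ 2 = m - 1 := Real.sq_sqrt (by linarith)
  have hs0 : 0 ≤ Real.sqrt (m - 1) := Real.sqrt_nonneg _
  constructor
  · linear_combination (ρ + 1) * hcubic
  · nlinarith [sq_nonneg (Real.sqrt (m-1) - 2), sq_nonneg (ρ - Real.sqrt (m-1))]
end

section
/- Let m ≥ 15 be a real number and let α = 2/(m + 2 + √(m² − 4m + 36)), so 1/α = (m + 2 + √(m² − 4m + 36))/2 > m. Then (1/α − (m−2)) · (√(1−α) − √α)² > 1. -/
/-- for real m ≥ 15 and α = 2/(m + 2 + √(m² - 4m + 36)), one has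
1/α > m and (1/α - (m-2))(√(1-α) - √α)² > 1. -/
theorem stmt_12 (m α : ℝ) (hm : 15 ≤ m)
    (hα : α = 2 / (m + 2 + Real.sqrt (m ^ 2 - 4 * m + 36))) :
    1 / α > m ∧
    (1 / α - (m - 2)) * (Real.sqrt (1 - α) - Real.sqrt α) ^ 2 > 1 := by
  have harg : (0:ℝ) ≤ m ^ 2 - 4 * m + 36 := by nlinarith
  set s := Real.sqrt (m ^ 2 - 4 * m + 36) with hs
  have hs0 : 0 ≤ s := Real.sqrt_nonneg _
  have hs2 : s ^ 2 = m ^ 2 - 4 * m + 36 := Real.sq_sqrt harg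
  have hsgt : s > m - 2 := by nlinarith
  have hden : m + 2 + s > 0 := by linarith
  have hαpos : 0 < α := by rw [hα]; positivity
  have hinv : 1 / α = (m + 2 + s) / 2 := by
    rw [hα]; field_simp
  have h1 : 1 / α > m := by rw [hinv]; linarith
  refine ⟨h1, ?_⟩
  have hα15 : α < 1 / 15 := by
    rw [hα, div_lt_div_iff₀ hden (by norm_num : (0:ℝ) < 15)]
    nlinarith
  -- the first factor exceeds 2
  have hf1 : 1 / α - (m - 2) > 2 := by rw [hinv]; linarith
  -- square roots
  have h1α : (0:ℝ) ≤ 1 - α := by linarith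
  set a := Real.sqrt α with ha
  set b := Real.sqrt (1 - α) with hb
  have ha0 : 0 ≤ a := Real.sqrt_nonneg _
  have hb0 : 0 ≤ b := Real.sqrt_nonneg _
  have ha2 : a ^ 2 = α := Real.sq_sqrt hαpos.le
  have hb2 : b ^ 2 = 1 - α := Real.sq_sqrt h1α
  have hab : a * b < 1 / 4 := by
    have hsq : (a * b) ^ 2 < (1/4 : ℝ) ^ 2 := by
      have : (a * b) ^ 2 = α * (1 - α) := by
        rw [mul_pow, ha2, hb2]
      rw [this]; nlinarith
    nlinarith [mul_nonneg ha0 hb0]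
  have hf2 : (b - a) ^ 2 > 1 / 2 := by nlinarith
  nlinarith [hf1, hf2, mul_pos hαpos hαpos]
end

section
/- Let H be a connected bicyclic k-uniform hypergraph with exactly two non-pendant vertices u and v (a vertex is pendant if it lies in exactly one edge). Then exactly three edges of H contain both u and v, and every other edge of H is a pendant edge attached at u or at v (i.e., contains exactly one of u,v and otherwise only pendant vertices). -/
/-- a connected bicyclic k-uniform hypergraph with exactly two non-pendant
vertices u,v has exactly three edges containing both u and v, and every other edge is a
pendant edge attached at u or v. -/
theorem stmt_18 {V : Type*} [Fintype V] [DecidableEq V]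
    (E : Finset (Finset V)) (k : ℕ) (hk : 2 ≤ k)
    (huniform : ∀ e ∈ E, e.card = k)
    (hconn : ∀ u v : V, Relation.ReflTransGen (fun a b => ∃ e ∈ E, a ∈ e ∧ b ∈ e) u v)
    (hcyc : Fintype.card V + 1 = E.card * (k - 1))
    (u v : V) (huv : u ≠ v)
    (hu : (E.filter (fun e => u ∈ e)).card ≠ 1)
    (hv : (E.filter (fun e => v ∈ e)).card ≠ 1)
    (hpend : ∀ w : V, w ≠ u → w ≠ v → (E.filter (fun e => w ∈ e)).card = 1) :
    (E.filter (fun e => u ∈ e ∧ v ∈ e)).card = 3 ∧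
    ∀ e ∈ E, ¬(u ∈ e ∧ v ∈ e) →
      ((u ∈ e ∧ v ∉ e) ∨ (v ∈ e ∧ u ∉ e)) ∧
      (∀ w ∈ e, w ≠ u → w ≠ v → (E.filter (fun f => w ∈ f)).card = 1) := by
  classical
  -- every edge contains u or v
  have key : ∀ e ∈ E, u ∈ e ∨ v ∈ e := by
    intro e he
    by_contra h
    push_neg at h
    obtain ⟨hue, hve⟩ := h
    have hk0 : 0 < e.card := by rw [huniform e he]; omega
    obtain ⟨w, hw⟩ := Finset.card_pos.mp hk0
    have inv : ∀ x, Relation.ReflTransGen (fun a b => ∃ f ∈ E, a ∈ f ∧ b ∈ f) w x → x ∈ e := by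
      intro x hx
      induction hx with
      | refl => exact hw
      | @tail b c hab hbc ih =>
        obtain ⟨f, hf, hbf, hcf⟩ := hbc
        have hbu : b ≠ u := fun h => hue (h ▸ ih)
        have hbv : b ≠ v := fun h => hve (h ▸ ih)
        have hd := hpend b hbu hbv
        obtain ⟨g, hg⟩ := Finset.card_eq_one.mp hd
        have he' : e ∈ E.filter (fun e => b ∈ e) := Finset.mem_filter.mpr ⟨he, ih⟩
        have hf' : f ∈ E.filter (fun e => b ∈ e) := Finset.mem_filter.mpr ⟨hf, hbf⟩
        rw [hg, Finset.mem_singleton] at he' hf'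
        exact (he'.trans hf'.symm) ▸ hcf
    exact hue (inv u (hconn w u))
  -- handshake: sum of degrees = sum of edge sizes
  have hsum : ∑ x : V, (E.filter (fun e => x ∈ e)).card = E.card * k := by
    have h1 : ∑ x : V, (E.filter (fun e => x ∈ e)).card = ∑ e ∈ E, e.card := by
      simp only [Finset.card_filter]
      rw [Finset.sum_comm]
      refine Finset.sum_congr rfl fun e he => ?_
      rw [← Finset.card_filter]
      congr 1
      simp
    rw [h1]
    rw [Finset.sum_congr rfl huniform, Finset.sum_const, smul_eq_mul]
  -- split off u and v
  have hvmem : v ∈ Finset.univ.erase u := Finset.mem_erase.mpr ⟨Ne.symm huv, Finset.mem_univ v⟩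
  have hsplit : ∑ x : V, (E.filter (fun e => x ∈ e)).card
      = (E.filter (fun e => u ∈ e)).card + (E.filter (fun e => v ∈ e)).card
        + ∑ x ∈ (Finset.univ.erase u).erase v, (E.filter (fun e => x ∈ e)).card := by
    rw [← Finset.sum_erase_add _ _ (Finset.mem_univ u),
        ← Finset.sum_erase_add _ _ hvmem]
    ring
  have hrest : ∑ x ∈ (Finset.univ.erase u).erase v, (E.filter (fun e => x ∈ e)).card
      = Fintype.card V - 2 := by
    rw [Finset.sum_congr rfl (fun x hx => by
      have h1 := Finset.mem_erase.mp hx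
      have h2 := Finset.mem_erase.mp h1.2
      exact hpend x h2.1 h1.1)]
    rw [Finset.sum_const, smul_eq_mul, mul_one,
        Finset.card_erase_of_mem hvmem, Finset.card_erase_of_mem (Finset.mem_univ u)]
    rw [Finset.card_univ]
    omega
  have hn2 : 2 ≤ Fintype.card V := Fintype.one_lt_card_iff_nontrivial.mpr ⟨⟨u, v, huv⟩⟩
  -- deg u + deg v = m + 3
  have hmk : E.card * k = E.card * (k - 1) + E.card := by
    conv_lhs => rw [show k = (k - 1) + 1 from by omega]
    rw [Nat.mul_add, Nat.mul_one]
  have hdeg : (E.filter (fun e => u ∈ e)).card + (E.filter (fun e => v ∈ e)).card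
      = E.card + 3 := by
    have h := hsum
    rw [hsplit, hrest] at h
    omega
  -- inclusion-exclusion
  have hAB : E.filter (fun e => u ∈ e) ∪ E.filter (fun e => v ∈ e) = E := by
    apply Finset.Subset.antisymm
    · intro e he
      rcases Finset.mem_union.mp he with h | h
      · exact (Finset.mem_filter.mp h).1
      · exact (Finset.mem_filter.mp h).1
    · intro e he
      rcases key e he with h | h
      · exact Finset.mem_union_left _ (Finset.mem_filter.mpr ⟨he, h⟩)
      · exact Finset.mem_union_right _ (Finset.mem_filter.mpr ⟨he, h⟩)
  have hI : E.filter (fun e => u ∈ e ∧ v ∈ e)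
      = E.filter (fun e => u ∈ e) ∩ E.filter (fun e => v ∈ e) := Finset.filter_and _ _ _
  have hcard := Finset.card_union_add_card_inter
    (E.filter (fun e => u ∈ e)) (E.filter (fun e => v ∈ e))
  rw [hAB, ← hI] at hcard
  refine ⟨by omega, ?_⟩
  intro e he hne
  refine ⟨?_, fun w _ hwu hwv => hpend w hwu hwv⟩
  rcases key e he with h | h
  · exact Or.inl ⟨h, fun hv' => hne ⟨h, hv'⟩⟩
  · exact Or.inr ⟨h, fun hu' => hne ⟨hu', h⟩⟩
end
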